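/- Let D be an n×n nonnegative real demand matrix, let δ > 0 and s ≥ 1, and consider any schedule of D over s parallel switches with reconfiguration delay δ that covers D. If some row or some column of D has k_i ≥ 1 nonzero entries whose sum is w_i, then the makespan of the schedule is at least (w_i + δ·max(k_i, s))/s. -/

import Mathlib

open Finset

/-- A configuration of an optical switch: a permutation of the `n` ports
together with a (time) weight. -/
abbrev Config (n : ℕ) := Equiv.Perm (Fin n) × ℝ

/-- A schedule over `s` parallel switches assigns to each switch a finite
list of configurations. -/
abbrev Schedule (n s : ℕ) := Fin s → List (Config n)

/-- All configuration weights of the schedule are positive. -/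
def ValidWeights {n s : ℕ} (S : Schedule n s) : Prop :=
  ∀ h : Fin s, ∀ c ∈ S h, 0 < c.2

/-- Total weight of all configurations (over all switches) servicing entry `(i, j)`,
i.e. whose permutation maps `i` to `j`. -/
def servedWeight {n s : ℕ} (S : Schedule n s) (i j : Fin n) : ℝ :=
  ∑ h : Fin s, (((S h).filter (fun c => decide (c.1 i = j))).map Prod.snd).sum

/-- The schedule covers the demand matrix `D`. -/
def Covers {n s : ℕ} (D : Matrix (Fin n) (Fin n) ℝ) (S : Schedule n s) : Prop :=
  ∀ i j : Fin n, D i j ≤ servedWeight S i j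

/-- The load of switch `h`: each configuration contributes the reconfiguration
delay `δ` plus its weight. -/
def load {n s : ℕ} (δ : ℝ) (S : Schedule n s) (h : Fin s) : ℝ :=
  ((S h).map (fun c => δ + c.2)).sum

/-- The makespan of the schedule: the maximum load over the switches. -/
noncomputable def makespan {n s : ℕ} (δ : ℝ) (S : Schedule n s) : ℝ :=
  ⨆ h : Fin s, load δ S h

lemma sum_map_filter_le {α : Type*} (L : List α) (p : α → Bool) (g : α → ℝ)
    (hg : ∀ c ∈ L, 0 ≤ g c) : ((L.filter p).map g).sum ≤ (L.map g).sum := by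
  induction L with
  | nil => simp
  | cons c L ih =>
    have h0 : 0 ≤ g c := hg c (List.mem_cons_self)
    have ih' := ih (fun c hc => hg c (List.mem_cons_of_mem _ hc))
    by_cases hc : p c
    · simp only [List.filter_cons, hc, if_true, List.map_cons, List.sum_cons]
      linarith
    · simp only [List.filter_cons, hc, Bool.false_eq_true, if_false, List.map_cons,
        List.sum_cons]
      linarith

lemma sum_map_delta {α : Type*} (δ : ℝ) (L : List α) (g : α → ℝ) :
    (L.map (fun c => δ + g c)).sum = δ * L.length + (L.map g).sum := by
  induction L with
  | nil => simp
  | cons c L ih => simp [ih]; ring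

lemma sum_filter_split {α β : Type*} [DecidableEq β] (L : List α) (f : α → β)
    (J : Finset β) (g : α → ℝ) :
    ∑ j ∈ J, ((L.filter (fun c => decide (f c = j))).map g).sum =
      ((L.filter (fun c => decide (f c ∈ J))).map g).sum := by
  induction L with
  | nil => simp
  | cons c L ih =>
    simp only [List.filter_cons]
    have key : ∀ j ∈ J, ((if (decide (f c = j)) = true
          then c :: L.filter (fun c => decide (f c = j))
          else L.filter (fun c => decide (f c = j))).map g).sum =
        (if f c = j then g c else 0) +
          ((L.filter (fun c => decide (f c = j))).map g).sum := by
      intro j _; by_cases h : f c = j <;> simp [h]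
    rw [Finset.sum_congr rfl key, Finset.sum_add_distrib, Finset.sum_ite_eq, ih]
    by_cases hc : f c ∈ J <;> simp [hc]

lemma key_bound {n s : ℕ} (hs : 1 ≤ s) (δ : ℝ) (hδ : 0 < δ) (S : Schedule n s)
    (hval : ValidWeights S) (f : Config n → Fin n) (J : Finset (Fin n)) (g : Fin n → ℝ)
    (hg : ∀ j ∈ J, 0 < g j)
    (hcover : ∀ j ∈ J, g j ≤ ∑ h : Fin s,
      (((S h).filter (fun c => decide (f c = j))).map Prod.snd).sum)
    (hJ : J.Nonempty) :
    (∑ j ∈ J, g j) + δ * max (J.card : ℝ) (s : ℝ) ≤ s * makespan δ S := by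
  set M := makespan δ S with hMdef
  have hs' : (0:ℝ) < s := by exact_mod_cast hs
  have hM : ∀ h : Fin s, load δ S h ≤ M := fun h =>
    le_ciSup (Set.finite_range _).bddAbove h
  have hw0 : ∀ (h : Fin s), ∀ c ∈ S h, 0 ≤ δ + c.2 := fun h c hc => by
    have := hval h c hc; linarith
  -- each demanded entry is serviced by some configuration
  have hexh : ∀ j ∈ J, ∃ h : Fin s, ((S h).filter (fun c => decide (f c = j))) ≠ [] := by
    intro j hj
    by_contra hcon
    push_neg at hcon
    have := hcover j hj
    simp only [hcon, List.map_nil, List.sum_nil, Finset.sum_const_zero] at this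
    linarith [hg j hj]
  have hex : ∀ j ∈ J, (1:ℝ) ≤ ∑ h : Fin s,
      (((S h).filter (fun c => decide (f c = j))).length : ℝ) := by
    intro j hj
    obtain ⟨h, hh⟩ := hexh j hj
    have h1 : (1:ℝ) ≤ (((S h).filter (fun c => decide (f c = j))).length : ℝ) := by
      exact_mod_cast List.length_pos_iff.2 hh
    exact le_trans h1 (Finset.single_le_sum
      (f := fun h : Fin s => (((S h).filter (fun c => decide (f c = j))).length : ℝ))
      (fun h _ => by positivity) (Finset.mem_univ h))
  have hsM : ∑ h : Fin s, M = s * M := by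
    rw [Finset.sum_const, Finset.card_univ, Fintype.card_fin, nsmul_eq_mul]
  -- Bound A : w + δ k ≤ s M
  have boundA : (∑ j ∈ J, g j) + δ * J.card ≤ s * M := by
    have h3 : ∀ j ∈ J, δ + g j ≤ ∑ h : Fin s,
        (((S h).filter (fun c => decide (f c = j))).map (fun c => δ + c.2)).sum := by
      intro j hj
      have heq : ∑ h : Fin s,
          (((S h).filter (fun c => decide (f c = j))).map (fun c => δ + c.2)).sum
          = δ * (∑ h : Fin s, (((S h).filter (fun c => decide (f c = j))).length : ℝ))
            + ∑ h : Fin s, (((S h).filter (fun c => decide (f c = j))).map Prod.snd).sum := by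
        rw [Finset.mul_sum, ← Finset.sum_add_distrib]
        exact Finset.sum_congr rfl (fun h _ => sum_map_delta δ _ _)
      rw [heq]
      have h4 := hex j hj
      have h5 := hcover j hj
      nlinarith
    calc (∑ j ∈ J, g j) + δ * J.card = ∑ j ∈ J, (δ + g j) := by
          rw [Finset.sum_add_distrib, Finset.sum_const, nsmul_eq_mul]; ring
      _ ≤ ∑ j ∈ J, ∑ h : Fin s,
          (((S h).filter (fun c => decide (f c = j))).map (fun c => δ + c.2)).sum :=
          Finset.sum_le_sum h3
      _ = ∑ h : Fin s, ∑ j ∈ J,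
          (((S h).filter (fun c => decide (f c = j))).map (fun c => δ + c.2)).sum :=
          Finset.sum_comm
      _ = ∑ h : Fin s,
          (((S h).filter (fun c => decide (f c ∈ J))).map (fun c => δ + c.2)).sum :=
          Finset.sum_congr rfl (fun h _ => sum_filter_split _ _ _ _)
      _ ≤ ∑ h : Fin s, load δ S h :=
          Finset.sum_le_sum (fun h _ => sum_map_filter_le _ _ _ (hw0 h))
      _ ≤ ∑ h : Fin s, M := Finset.sum_le_sum (fun h _ => hM h)
      _ = s * M := hsM
  -- Bound B : w + δ s ≤ s M
  have boundB : (∑ j ∈ J, g j) + δ * s ≤ s * M := by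
    classical
    set p : Fin s → Prop := fun h => ((S h).filter (fun c => decide (f c ∈ J))) ≠ [] with hp
    set relW : Fin s → ℝ :=
      fun h => (((S h).filter (fun c => decide (f c ∈ J))).map Prod.snd).sum with hrelW
    have relW_nonneg : ∀ h, 0 ≤ relW h := by
      intro h
      apply List.sum_nonneg
      intro x hx
      obtain ⟨c, hc, rfl⟩ := List.mem_map.1 hx
      exact (hval h c (List.mem_of_mem_filter hc)).le
    have hTload : ∀ h, p h → δ + relW h ≤ load δ S h := by
      intro h hh
      have hlen : (1:ℝ) ≤ (((S h).filter (fun c => decide (f c ∈ J))).length : ℝ) := by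
        exact_mod_cast List.length_pos_iff.2 hh
      have hle := sum_map_filter_le (S h) (fun c => decide (f c ∈ J))
        (fun c => δ + c.2) (hw0 h)
      rw [sum_map_delta] at hle
      have : δ * 1 ≤ δ * (((S h).filter (fun c => decide (f c ∈ J))).length : ℝ) :=
        mul_le_mul_of_nonneg_left hlen hδ.le
      simp only [load]
      linarith
    have hMδ : δ ≤ M := by
      obtain ⟨j, hj⟩ := hJ
      obtain ⟨h, hh⟩ := hexh j hj
      obtain ⟨c, hc⟩ := List.exists_mem_of_ne_nil _ hh
      have hcS := List.mem_of_mem_filter hc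
      have hfc : f c = j := by
        have := List.of_mem_filter hc
        simpa using this
      have hph : p h := by
        intro hemp
        have : c ∈ (S h).filter (fun c => decide (f c ∈ J)) := by
          apply List.mem_filter.2 ⟨hcS, ?_⟩
          simp [hfc, hj]
        rw [hemp] at this
        simp at this
      calc δ ≤ δ + relW h := by linarith [relW_nonneg h]
        _ ≤ load δ S h := hTload h hph
        _ ≤ M := hM h
    have hsplitM : ∑ h ∈ univ.filter p, M + ∑ h ∈ univ.filter (fun h => ¬ p h), M
        = s * M := by rw [Finset.sum_filter_add_sum_filter_not, hsM]
    have hcards : ((univ.filter p).card : ℝ) + ((univ.filter (fun h => ¬ p h)).card : ℝ)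
        = (s : ℝ) := by
      have := Finset.card_filter_add_card_filter_not (s := (univ : Finset (Fin s)))
        (p := p)
      rw [Finset.card_univ, Fintype.card_fin] at this
      exact_mod_cast this
    have hrelsum : (∑ j ∈ J, g j) ≤ ∑ h : Fin s, relW h := by
      calc (∑ j ∈ J, g j) ≤ ∑ j ∈ J, ∑ h : Fin s,
            (((S h).filter (fun c => decide (f c = j))).map Prod.snd).sum :=
            Finset.sum_le_sum hcover
        _ = ∑ h : Fin s, ∑ j ∈ J,
            (((S h).filter (fun c => decide (f c = j))).map Prod.snd).sum := Finset.sum_comm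
        _ = ∑ h : Fin s, relW h :=
            Finset.sum_congr rfl (fun h _ => sum_filter_split _ _ _ _)
    have hrelT : ∑ h : Fin s, relW h = ∑ h ∈ univ.filter p, relW h := by
      rw [← Finset.sum_filter_add_sum_filter_not univ p relW]
      have : ∑ h ∈ univ.filter (fun h => ¬ p h), relW h = 0 := by
        apply Finset.sum_eq_zero
        intro h hh
        have : ¬ p h := (Finset.mem_filter.1 hh).2
        simp only [hp, not_not] at this
        simp [hrelW, this]
      rw [this, add_zero]
    have hT1 : δ * ((univ.filter p).card : ℝ) + ∑ h ∈ univ.filter p, relW h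
        ≤ ∑ h ∈ univ.filter p, M := by
      have : ∑ h ∈ univ.filter p, (δ + relW h) ≤ ∑ h ∈ univ.filter p, M := by
        apply Finset.sum_le_sum
        intro h hh
        exact le_trans (hTload h (Finset.mem_filter.1 hh).2) (hM h)
      rw [Finset.sum_add_distrib, Finset.sum_const, nsmul_eq_mul] at this
      linarith
    have hT2 : δ * ((univ.filter (fun h => ¬ p h)).card : ℝ)
        ≤ ∑ h ∈ univ.filter (fun h => ¬ p h), M := by
      calc δ * ((univ.filter (fun h => ¬ p h)).card : ℝ)
          = ∑ _h ∈ univ.filter (fun h => ¬ p h), δ := by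
            rw [Finset.sum_const, nsmul_eq_mul]; ring
        _ ≤ ∑ h ∈ univ.filter (fun h => ¬ p h), M :=
            Finset.sum_le_sum (fun h _ => hMδ)
    have := hrelsum
    rw [hrelT] at this
    nlinarith [hT1, hT2, hsplitM, hcards]
  rcases le_total (J.card : ℝ) (s : ℝ) with hle | hle
  · rw [max_eq_right hle]; exact boundB
  · rw [max_eq_left hle]; exact boundA

theorem lower_bound_one {n s : ℕ} (hs : 1 ≤ s)
    (D : Matrix (Fin n) (Fin n) ℝ) (hD : ∀ i j, 0 ≤ D i j)
    (δ : ℝ) (hδ : 0 < δ)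
    (S : Schedule n s) (hval : ValidWeights S) (hcov : Covers D S)
    (k : ℕ) (hk : 1 ≤ k) (w : ℝ)
    (hrc :
      (∃ i, (univ.filter fun j => D i j ≠ 0).card = k ∧
        ∑ j ∈ univ.filter (fun j => D i j ≠ 0), D i j = w) ∨
      (∃ j, (univ.filter fun i => D i j ≠ 0).card = k ∧
        ∑ i ∈ univ.filter (fun i => D i j ≠ 0), D i j = w)) :
    (w + δ * max (k : ℝ) (s : ℝ)) / s ≤ makespan δ S := by
  have hs' : (0:ℝ) < s := by exact_mod_cast hs
  rw [div_le_iff₀ hs']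
  have key : (w + δ * max (k : ℝ) (s : ℝ)) ≤ s * makespan δ S := by
    rcases hrc with ⟨i, hcard, hsum⟩ | ⟨j, hcard, hsum⟩
    · have := key_bound hs δ hδ S hval (fun c => c.1 i)
        (univ.filter fun j => D i j ≠ 0) (fun j => D i j)
        (fun j hj => lt_of_le_of_ne (hD i j) (Ne.symm (Finset.mem_filter.1 hj).2))
        (fun j hj => hcov i j)
        (Finset.card_pos.1 (by rw [hcard]; exact hk))
      rw [hsum, hcard] at this
      exact this
    · have hcover : ∀ i ∈ (univ.filter fun i => D i j ≠ 0), D i j ≤ ∑ h : Fin s,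
          (((S h).filter (fun c => decide ((fun c : Config n => c.1.symm j) c = i))).map
            Prod.snd).sum := by
        intro i _
        have heq : ∀ h : Fin s,
            (S h).filter (fun c => decide (c.1.symm j = i))
              = (S h).filter (fun c => decide (c.1 i = j)) := by
          intro h
          apply List.filter_congr
          intro c _
          simp only [decide_eq_decide, Equiv.symm_apply_eq]
          exact ⟨fun h => h.symm, fun h => h.symm⟩
        calc D i j ≤ servedWeight S i j := hcov i j
          _ = _ := by
            unfold servedWeight
            exact Finset.sum_congr rfl (fun h _ => by rw [heq h])
      have := key_bound hs δ hδ S hval (fun c => c.1.symm j)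
        (univ.filter fun i => D i j ≠ 0) (fun i => D i j)
        (fun i hi => lt_of_le_of_ne (hD i j) (Ne.symm (Finset.mem_filter.1 hi).2))
        hcover
        (Finset.card_pos.1 (by rw [hcard]; exact hk))
      rw [hsum, hcard] at this
      exact this
  linarith
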